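/- Composition closure of Reedy fibrations in a gluing category: let M : C₀ ⥤ C₁ be lex, with universal maps π₀ in C₀ and π₁ in C₁ such that π₀-fibrations and π₁-fibrations are each closed under composition and pullback. Call a map E ⟶ B in Gl(M) a Reedy fibration if its 0-component E₀ ⟶ B₀ is a π₀-fibration and its relative matching map E₁ ⟶ B₁ ×_{M B₀} M E₀ is a π₁-fibration. Then Reedy fibrations in Gl(M) are closed under composition. -/

import Mathlib

open CategoryTheory CategoryTheory.Limits

/-- A map is a `π`-fibration if it arises as a pullback of the universal map `π`. -/
def IsPiFib {C : Type*} [Category C] {Ut U : C} (π : Ut ⟶ U) {E B : C} (p : E ⟶ B) : Prop :=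
  ∃ (c : B ⟶ U) (t : E ⟶ Ut), IsPullback t p π c

variable {C₀ C₁ : Type*} [Category C₀] [Category C₁] [HasFiniteLimits C₀] [HasFiniteLimits C₁]

/-- A map `f : E ⟶ B` in the gluing category `Gl(M) = C₁ ↓ M` is a Reedy fibration if
its `C₀`-component is a `π₀`-fibration and its relative matching map
`E₁ ⟶ B₁ ×_{M B₀} M E₀` is a `π₁`-fibration. -/
def IsReedyFib (M : C₀ ⥤ C₁) {Ut₀ U₀ : C₀} (π₀ : Ut₀ ⟶ U₀) {Ut₁ U₁ : C₁} (π₁ : Ut₁ ⟶ U₁)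
    {E B : Comma (𝟭 C₁) M} (f : E ⟶ B) : Prop :=
  IsPiFib π₀ f.right ∧
    IsPiFib π₁
      (pullback.lift f.left E.hom (by simpa using f.w) :
        E.left ⟶ pullback B.hom (M.map f.right))

/-- π-fibrations are stable under arbitrary pullback squares. -/
lemma IsPiFib.of_isPullback {C : Type*} [Category C] {Ut U : C} {π : Ut ⟶ U}
    {E B E' B' : C} {p : E ⟶ B} {p' : E' ⟶ B'} {u : E' ⟶ E} {v : B' ⟶ B}
    (sq : IsPullback u p' p v) (hp : IsPiFib π p) : IsPiFib π p' := by
  obtain ⟨c, t, h⟩ := hp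
  exact ⟨v ≫ c, u ≫ t, sq.paste_horiz h⟩

/-- transport an `IsPullback` along an equality of the bottom map. -/
lemma isPullback_congr_bottom {C : Type*} [Category C] {P X Y Z : C}
    {t : P ⟶ X} {l : P ⟶ Y} {r : X ⟶ Z} {b b' : Y ⟶ Z} (e : b = b')
    (h : IsPullback t l r b) : IsPullback t l r b' := e ▸ h

/-- transport `IsPiFib` of a pullback lift along an equality of the second map. -/
lemma isPiFib_lift_congr {C : Type*} [Category C] [HasFiniteLimits C]
    {Ut U : C} (π : Ut ⟶ U) {W X Y Z : C} (a : X ⟶ Z) {b b' : Y ⟶ Z} (e : b = b')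
    (u : W ⟶ X) (v : W ⟶ Y) {w : u ≫ a = v ≫ b} {w' : u ≫ a = v ≫ b'}
    (h : IsPiFib π (pullback.lift u v w : W ⟶ pullback a b)) :
    IsPiFib π (pullback.lift u v w' : W ⟶ pullback a b') := by
  subst e; exact h

/-- The key computation, purely in `C₁`: the relative matching map of a composite
factors as the matching map of `f` followed by a pullback of the matching map of `g`. -/
lemma matching_comp_isPiFib {C : Type*} [Category C] [HasFiniteLimits C]
    {Ut U : C} (π : Ut ⟶ U)
    (hcomp : ∀ {X Y Z : C} (a : X ⟶ Y) (b : Y ⟶ Z),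
      IsPiFib π a → IsPiFib π b → IsPiFib π (a ≫ b))
    {E₁ B₁ A₁ ME MB MA : C} (e : E₁ ⟶ ME) (b : B₁ ⟶ MB) (a : A₁ ⟶ MA)
    (fl : E₁ ⟶ B₁) (fr : ME ⟶ MB) (gl : B₁ ⟶ A₁) (gr : MB ⟶ MA)
    (wf : fl ≫ b = e ≫ fr) (wg : gl ≫ a = b ≫ gr)
    {w : (fl ≫ gl) ≫ a = e ≫ (fr ≫ gr)}
    (hf : IsPiFib π (pullback.lift fl e wf : E₁ ⟶ pullback b fr))
    (hg : IsPiFib π (pullback.lift gl b wg : B₁ ⟶ pullback a gr)) :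
    IsPiFib π (pullback.lift (fl ≫ gl) e w : E₁ ⟶ pullback a (fr ≫ gr)) := by
  -- the comparison map between pullbacks
  have hqw : pullback.fst a (fr ≫ gr) ≫ a = (pullback.snd a (fr ≫ gr) ≫ fr) ≫ gr := by
    rw [pullback.condition, Category.assoc]
  set q : pullback a (fr ≫ gr) ⟶ pullback a gr :=
    pullback.lift (pullback.fst a (fr ≫ gr)) (pullback.snd a (fr ≫ gr) ≫ fr) hqw with hq_def
  have hq : IsPullback q (pullback.snd a (fr ≫ gr)) (pullback.snd a gr) fr := by
    apply IsPullback.of_right _ (pullback.lift_snd _ _ _) (IsPullback.of_hasPullback a gr)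
    rw [pullback.lift_fst]
    exact IsPullback.of_hasPullback a (fr ≫ gr)
  -- the map r : pullback b fr ⟶ pullback a (fr ≫ gr)
  have hrw : (pullback.fst b fr ≫ gl) ≫ a = pullback.snd b fr ≫ (fr ≫ gr) := by
    rw [Category.assoc, wg, ← Category.assoc, pullback.condition, Category.assoc]
  set r : pullback b fr ⟶ pullback a (fr ≫ gr) :=
    pullback.lift (pullback.fst b fr ≫ gl) (pullback.snd b fr) hrw with hr_def
  -- r is a pullback of the matching map of g
  have hr : IsPullback (pullback.fst b fr) r (pullback.lift gl b wg) q := by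
    apply IsPullback.of_bot _ _ hq
    · rw [pullback.lift_snd, pullback.lift_snd]
      exact IsPullback.of_hasPullback b fr
    · apply pullback.hom_ext
      · rw [hq_def, hr_def]
        simp only [Category.assoc]
        rw [pullback.lift_fst, pullback.lift_fst, pullback.lift_fst]
      · rw [hq_def, hr_def]
        simp only [Category.assoc]
        rw [pullback.lift_snd, pullback.lift_snd, pullback.lift_snd_assoc, pullback.condition]
  have hrfib : IsPiFib π r := IsPiFib.of_isPullback hr hg
  have hfact : (pullback.lift (fl ≫ gl) e w : E₁ ⟶ pullback a (fr ≫ gr)) =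
      pullback.lift fl e wf ≫ r := by
    apply pullback.hom_ext
    · rw [hr_def]
      simp only [Category.assoc]
      rw [pullback.lift_fst, pullback.lift_fst, pullback.lift_fst_assoc]
    · rw [hr_def]
      simp only [Category.assoc]
      rw [pullback.lift_snd, pullback.lift_snd, pullback.lift_snd]
  rw [hfact]
  exact hcomp _ _ hf hrfib

/-- if `π₀`- and `π₁`-fibrations are each closed under composition and
stable under pullback, then Reedy fibrations in the gluing category `Gl(M)` of a lex
functor `M : C₀ ⥤ C₁` are closed under composition. -/
theorem reedy_fib_comp (M : C₀ ⥤ C₁) [PreservesFiniteLimits M]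
    {Ut₀ U₀ : C₀} (π₀ : Ut₀ ⟶ U₀) {Ut₁ U₁ : C₁} (π₁ : Ut₁ ⟶ U₁)
    (h₀comp : ∀ {X Y Z : C₀} (a : X ⟶ Y) (b : Y ⟶ Z),
      IsPiFib π₀ a → IsPiFib π₀ b → IsPiFib π₀ (a ≫ b))
    (h₀pb : ∀ {X Y Z : C₀} (a : X ⟶ Z) (b : Y ⟶ Z),
      IsPiFib π₀ a → IsPiFib π₀ (pullback.snd a b))
    (h₁comp : ∀ {X Y Z : C₁} (a : X ⟶ Y) (b : Y ⟶ Z),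
      IsPiFib π₁ a → IsPiFib π₁ b → IsPiFib π₁ (a ≫ b))
    (h₁pb : ∀ {X Y Z : C₁} (a : X ⟶ Z) (b : Y ⟶ Z),
      IsPiFib π₁ a → IsPiFib π₁ (pullback.snd a b))
    {E B A : Comma (𝟭 C₁) M} (f : E ⟶ B) (g : B ⟶ A)
    (hf : IsReedyFib M π₀ π₁ f) (hg : IsReedyFib M π₀ π₁ g) :
    IsReedyFib M π₀ π₁ (f ≫ g) := by
  obtain ⟨hf0, hf1⟩ := hf
  obtain ⟨hg0, hg1⟩ := hg
  refine ⟨h₀comp _ _ hf0 hg0, ?_⟩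
  have wf : f.left ≫ B.hom = E.hom ≫ M.map f.right := by simpa using f.w
  have wg : g.left ≫ A.hom = B.hom ≫ M.map g.right := by simpa using g.w
  have w : (f.left ≫ g.left) ≫ A.hom = E.hom ≫ (M.map f.right ≫ M.map g.right) := by
    rw [Category.assoc, wg, ← Category.assoc, wf, Category.assoc]
  have key := matching_comp_isPiFib π₁ h₁comp E.hom B.hom A.hom
    f.left (M.map f.right) g.left (M.map g.right) wf wg (w := w) hf1 hg1
  exact isPiFib_lift_congr π₁ A.hom (by simp) _ _ key
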